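/- Let G be a graph in the class H* with partition A1,...,A6 and χ(G) = k, let {i,i′} = {1,4}, and let c be a proper k-coloring of G with colors {1,...,k}. Suppose j′ is a color that appears on A6 but not on A_i under c, and j is a color that appears on A_i but not on A6 under c. Then G has a proper k-coloring c′ that agrees with c on A2 ∪ A3 ∪ A6, such that j does not appear on A_i under c′ and j′ appears on A_i under c′ (and j′ still appears on A6 under c′). -/

import Mathlib

open SimpleGraph

/-- The co-gem: the disjoint union `P₄ + P₁`. -/
def cogem : SimpleGraph (Fin 4 ⊕ Fin 1) :=
  pathGraph 4 ⊕g (⊥ : SimpleGraph (Fin 1))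

/-- The gem: the complement of the co-gem. -/
def gem : SimpleGraph (Fin 4 ⊕ Fin 1) := cogemᶜ

/-- `G` is `H`-free: no induced subgraph of `G` is isomorphic to `H`. -/
def HFree {W V : Type*} (H : SimpleGraph W) (G : SimpleGraph V) : Prop :=
  IsEmpty (H ↪g G)

/-- `G` is `k`-vertex-critical: `χ(G) = k` and `χ(G - v) < k` for every vertex `v`. -/
def VertexCritical {V : Type*} (G : SimpleGraph V) (k : ℕ) : Prop :=
  G.chromaticNumber = k ∧ ∀ v : V, (G.induce {v}ᶜ).chromaticNumber < k

/-- `G` belongs to the class `ℋ` with the partition `A₁, …, A₆`. -/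
structure ClassH {V : Type*} (G : SimpleGraph V) (A₁ A₂ A₃ A₄ A₅ A₆ : Set V) : Prop where
  gemFree : HFree gem G
  cogemFree : HFree cogem G
  ne₁ : A₁.Nonempty
  ne₂ : A₂.Nonempty
  ne₃ : A₃.Nonempty
  ne₄ : A₄.Nonempty
  ne₅ : A₅.Nonempty
  ne₆ : A₆.Nonempty
  cover : A₁ ∪ A₂ ∪ A₃ ∪ A₄ ∪ A₅ ∪ A₆ = Set.univ
  disj : List.Pairwise Disjoint [A₁, A₂, A₃, A₄, A₅, A₆]
  comp₁ : ∀ x ∈ A₁, ∀ y ∈ A₂ ∪ A₅, G.Adj x y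
  anti₁ : ∀ x ∈ A₁, ∀ y ∈ A₃ ∪ A₄ ∪ A₆, ¬ G.Adj x y
  comp₂ : ∀ x ∈ A₂, ∀ y ∈ A₁ ∪ A₃ ∪ A₆, G.Adj x y
  anti₂ : ∀ x ∈ A₂, ∀ y ∈ A₄ ∪ A₅, ¬ G.Adj x y
  comp₃ : ∀ x ∈ A₃, ∀ y ∈ A₂ ∪ A₄ ∪ A₆, G.Adj x y
  anti₃ : ∀ x ∈ A₃, ∀ y ∈ A₁ ∪ A₅, ¬ G.Adj x y
  comp₄ : ∀ x ∈ A₄, ∀ y ∈ A₃ ∪ A₅, G.Adj x y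
  anti₄ : ∀ x ∈ A₄, ∀ y ∈ A₁ ∪ A₂ ∪ A₆, ¬ G.Adj x y

/-- `G` belongs to the class `ℋ*`: it is in `ℋ` and `A₁, A₂, A₃, A₄` are cliques. -/
structure ClassHStar {V : Type*} (G : SimpleGraph V) (A₁ A₂ A₃ A₄ A₅ A₆ : Set V)
    extends ClassH G A₁ A₂ A₃ A₄ A₅ A₆ : Prop where
  clique₁ : G.IsClique A₁
  clique₂ : G.IsClique A₂
  clique₃ : G.IsClique A₃
  clique₄ : G.IsClique A₄

theorem stmt9 (V : Type*) [Fintype V] (G : SimpleGraph V) (A₁ A₂ A₃ A₄ A₅ A₆ : Set V)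
    (hH : ClassHStar G A₁ A₂ A₃ A₄ A₅ A₆) (k : ℕ) (hchrom : G.chromaticNumber = k)
    (Ai : Set V) (hAi : Ai = A₁ ∨ Ai = A₄) (c : G.Coloring (Fin k)) (j j' : Fin k)
    (hj'on6 : ∃ v ∈ A₆, c v = j') (hj'noti : ¬ ∃ v ∈ Ai, c v = j')
    (hjoni : ∃ v ∈ Ai, c v = j) (hjnot6 : ¬ ∃ v ∈ A₆, c v = j) :
    ∃ c' : G.Coloring (Fin k),
      (∀ v ∈ A₂ ∪ A₃ ∪ A₆, c' v = c v) ∧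
      (∀ v ∈ Ai, c' v ≠ j) ∧ (∃ v ∈ Ai, c' v = j') ∧ (∃ v ∈ A₆, c' v = j') := by
  classical
  obtain ⟨hC, cl₁, cl₂, cl₃, cl₄⟩ := hH
  obtain ⟨-, -, -, -, -, -, -, -, cover, disj, comp₁, anti₁, comp₂, anti₂,
    comp₃, anti₃, comp₄, anti₄⟩ := hC
  simp only [List.pairwise_cons, List.mem_cons, List.not_mem_nil] at disj
  have d12 : Disjoint A₁ A₂ := disj.1 A₂ (by tauto)
  have d13 : Disjoint A₁ A₃ := disj.1 A₃ (by tauto)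
  have d16 : Disjoint A₁ A₆ := disj.1 A₆ (by tauto)
  have d24 : Disjoint A₂ A₄ := disj.2.1 A₄ (by tauto)
  have d25 : Disjoint A₂ A₅ := disj.2.1 A₅ (by tauto)
  have d34 : Disjoint A₃ A₄ := disj.2.2.1 A₄ (by tauto)
  have d35 : Disjoint A₃ A₅ := disj.2.2.1 A₅ (by tauto)
  have d46 : Disjoint A₄ A₆ := disj.2.2.2.1 A₆ (by tauto)
  have d56 : Disjoint A₅ A₆ := disj.2.2.2.2.1 A₆ (by tauto)
  push_neg at hj'noti hjnot6
  obtain ⟨y, hy6, hyj'⟩ := hj'on6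
  obtain ⟨v₀, hv₀i, hv₀j⟩ := hjoni
  -- every vertex lies in one of the six sets
  have hcov : ∀ v : V, v ∈ A₁ ∨ v ∈ A₂ ∨ v ∈ A₃ ∨ v ∈ A₄ ∨ v ∈ A₅ ∨ v ∈ A₆ := by
    intro v
    have : v ∈ A₁ ∪ A₂ ∪ A₃ ∪ A₄ ∪ A₅ ∪ A₆ := by rw [cover]; trivial
    simp only [Set.mem_union] at this
    tauto
  have hji' : j ≠ j' := by
    rintro rfl; exact hjnot6 y hy6 hyj'
  -- j does not appear on A₅ (A_i is complete to A₅)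
  have hF1 : ∀ v ∈ A₅, c v ≠ j := by
    intro v hv hvj
    have hadj : G.Adj v₀ v := by
      rcases hAi with h | h
      · exact comp₁ v₀ (h ▸ hv₀i) v (Or.inr hv)
      · exact comp₄ v₀ (h ▸ hv₀i) v (Or.inr hv)
    exact c.valid hadj (hv₀j.trans hvj.symm)
  -- j' does not appear on A₂ ∪ A₃
  have hF2 : ∀ v, v ∈ A₂ ∪ A₃ → c v ≠ j' := by
    rintro v (hv | hv) hvj'
    · exact c.valid (comp₂ v hv y (Or.inr hy6)) (hvj'.trans hyj'.symm)
    · exact c.valid (comp₃ v hv y (Or.inr hy6)) (hvj'.trans hyj'.symm)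
  -- A_i is disjoint from A₂, A₃, A₆
  have hiDisj : ∀ v ∈ Ai, v ∉ A₂ ∧ v ∉ A₃ ∧ v ∉ A₆ := by
    intro v hv
    rcases hAi with h | h
    · exact ⟨fun hx => d12.le_bot ⟨h ▸ hv, hx⟩, fun hx => d13.le_bot ⟨h ▸ hv, hx⟩,
        fun hx => d16.le_bot ⟨h ▸ hv, hx⟩⟩
    · exact ⟨fun hx => d24.le_bot ⟨hx, h ▸ hv⟩, fun hx => d34.le_bot ⟨hx, h ▸ hv⟩,
        fun hx => d46.le_bot ⟨h ▸ hv, hx⟩⟩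
  by_cases h5 : ∃ w ∈ A₅, c w = j'
  · -- swap colours j and j' on A₁ ∪ A₄ ∪ A₅
    obtain ⟨w, hw5, hwj'⟩ := h5
    -- any vertex of A₁ ∪ A₄ ∪ A₅ coloured j' lies in A₅
    have hF3 : ∀ v, v ∈ A₁ ∪ A₄ ∪ A₅ → c v = j' → v ∈ A₅ := by
      rintro v ((hv | hv) | hv) hvj'
      · exact absurd (hvj'.trans hwj'.symm) (c.valid (comp₁ v hv w (Or.inr hw5)))
      · exact absurd (hvj'.trans hwj'.symm) (c.valid (comp₄ v hv w (Or.inr hw5)))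
      · exact hv
    set R : Set V := A₁ ∪ A₄ ∪ A₅ with hR
    have hmemR : ∀ v, v ∉ R → v ∈ A₂ ∪ A₃ ∨ v ∈ A₆ := by
      intro v hv
      rcases hcov v with h | h | h | h | h | h
      · exact absurd (Or.inl (Or.inl h)) hv
      · exact Or.inl (Or.inl h)
      · exact Or.inl (Or.inr h)
      · exact absurd (Or.inl (Or.inr h)) hv
      · exact absurd (Or.inr h) hv
      · exact Or.inr h
    set f : V → Fin k := fun v => if v ∈ R then Equiv.swap j j' (c v) else c v with hf
    have hfR : ∀ v, v ∈ R → f v = Equiv.swap j j' (c v) := fun v hv => if_pos hv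
    have hfnR : ∀ v, v ∉ R → f v = c v := fun v hv => if_neg hv
    have hcross : ∀ a b, G.Adj a b → a ∈ R → b ∉ R → Equiv.swap j j' (c a) ≠ c b := by
      intro a b hab haR hbR heq
      by_cases haj : c a = j
      · rw [haj, Equiv.swap_apply_left] at heq
        rcases hmemR b hbR with hb | hb
        · exact hF2 b hb heq.symm
        · rcases haR with (ha | ha) | ha
          · exact anti₁ a ha b (Or.inr hb) hab
          · exact anti₄ a ha b (Or.inr hb) hab
          · exact hF1 a ha haj
      · by_cases haj' : c a = j'
        · rw [haj', Equiv.swap_apply_right] at heq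
          have ha5 : a ∈ A₅ := hF3 a haR haj'
          rcases hmemR b hbR with hb | hb
          · rcases hb with hb | hb
            · exact anti₂ b hb a (Or.inr ha5) hab.symm
            · exact anti₃ b hb a (Or.inr ha5) hab.symm
          · exact hjnot6 b hb heq.symm
        · rw [Equiv.swap_apply_of_ne_of_ne haj haj'] at heq
          exact c.valid hab heq
    have hvalid : ∀ {a b : V}, G.Adj a b → f a ≠ f b := by
      intro a b hab
      by_cases haR : a ∈ R <;> by_cases hbR : b ∈ R
      · rw [hfR a haR, hfR b hbR]
        exact fun h => c.valid hab (Equiv.injective _ h)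
      · rw [hfR a haR, hfnR b hbR]
        exact hcross a b hab haR hbR
      · rw [hfnR a haR, hfR b hbR]
        exact fun h => hcross b a hab.symm hbR haR h.symm
      · rw [hfnR a haR, hfnR b hbR]
        exact c.valid hab
    refine ⟨Coloring.mk f hvalid, ?_, ?_, ?_, ?_⟩
    · -- agrees with c on A₂ ∪ A₃ ∪ A₆
      intro v hv
      have hvR : v ∉ R := by
        rintro ((h | h) | h)
        · rcases hv with (hv | hv) | hv
          · exact d12.le_bot ⟨h, hv⟩
          · exact d13.le_bot ⟨h, hv⟩
          · exact d16.le_bot ⟨h, hv⟩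
        · rcases hv with (hv | hv) | hv
          · exact d24.le_bot ⟨hv, h⟩
          · exact d34.le_bot ⟨hv, h⟩
          · exact d46.le_bot ⟨h, hv⟩
        · rcases hv with (hv | hv) | hv
          · exact d25.le_bot ⟨hv, h⟩
          · exact d35.le_bot ⟨hv, h⟩
          · exact d56.le_bot ⟨h, hv⟩
      exact hfnR v hvR
    · -- j does not appear on A_i
      intro v hv
      have hvR : v ∈ R := by
        rcases hAi with h | h
        · exact Or.inl (Or.inl (h ▸ hv))
        · exact Or.inl (Or.inr (h ▸ hv))
      show f v ≠ j
      rw [hfR v hvR]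
      intro heq
      have hcv : c v = j' := by
        have h2 := congrArg (Equiv.swap j j') heq
        rwa [Equiv.swap_apply_self, Equiv.swap_apply_left] at h2
      exact hj'noti v hv hcv
    · -- j' appears on A_i (at v₀)
      refine ⟨v₀, hv₀i, ?_⟩
      have hvR : v₀ ∈ R := by
        rcases hAi with h | h
        · exact Or.inl (Or.inl (h ▸ hv₀i))
        · exact Or.inl (Or.inr (h ▸ hv₀i))
      show f v₀ = j'
      rw [hfR v₀ hvR, hv₀j, Equiv.swap_apply_left]
    · -- j' still appears on A₆ (at y)
      refine ⟨y, hy6, ?_⟩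
      have hyR : y ∉ R := by
        rintro ((h | h) | h)
        · exact d16.le_bot ⟨h, hy6⟩
        · exact d46.le_bot ⟨h, hy6⟩
        · exact d56.le_bot ⟨h, hy6⟩
      show f y = j'
      rw [hfnR y hyR, hyj']
  · -- no vertex of A₅ has colour j'; just recolour v₀ to j'
    push_neg at h5
    have hnbr : ∀ b, G.Adj v₀ b → c b ≠ j' := by
      intro b hab hbj'
      rcases hcov b with hb | hb | hb | hb | hb | hb
      · rcases hAi with h | h
        · exact hj'noti b (h ▸ hb) hbj'
        · exact anti₁ b hb v₀ (Or.inl (Or.inr (h ▸ hv₀i))) hab.symm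
      · exact hF2 b (Or.inl hb) hbj'
      · exact hF2 b (Or.inr hb) hbj'
      · rcases hAi with h | h
        · exact anti₁ v₀ (h ▸ hv₀i) b (Or.inl (Or.inr hb)) hab
        · exact hj'noti b (h ▸ hb) hbj'
      · exact h5 b hb hbj'
      · rcases hAi with h | h
        · exact anti₁ v₀ (h ▸ hv₀i) b (Or.inr hb) hab
        · exact anti₄ v₀ (h ▸ hv₀i) b (Or.inr hb) hab
    have hcliquei : G.IsClique Ai := by
      rcases hAi with h | h
      · exact h ▸ cl₁
      · exact h ▸ cl₄
    set f : V → Fin k := fun v => if v = v₀ then j' else c v with hf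
    have hf0 : f v₀ = j' := if_pos rfl
    have hfn : ∀ v, v ≠ v₀ → f v = c v := fun v hv => if_neg hv
    have hvalid : ∀ {a b : V}, G.Adj a b → f a ≠ f b := by
      intro a b hab
      by_cases ha : a = v₀ <;> by_cases hb : b = v₀
      · subst ha; subst hb; exact absurd hab (G.loopless.irrefl _)
      · subst ha; rw [hf0, hfn b hb]
        exact fun h => hnbr b hab h.symm
      · subst hb; rw [hf0, hfn a ha]
        exact fun h => hnbr a hab.symm h
      · rw [hfn a ha, hfn b hb]; exact c.valid hab
    refine ⟨Coloring.mk f hvalid, ?_, ?_, ⟨v₀, hv₀i, hf0⟩, ?_⟩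
    · intro v hv
      have hvne : v ≠ v₀ := by
        rintro rfl
        obtain ⟨h2, h3, h6⟩ := hiDisj v hv₀i
        rcases hv with (hv | hv) | hv
        exacts [h2 hv, h3 hv, h6 hv]
      exact hfn v hvne
    · intro v hv
      by_cases hvv : v = v₀
      · subst hvv
        show f v ≠ j
        rw [hf0]; exact hji'.symm
      · show f v ≠ j
        rw [hfn v hvv]
        intro hvj
        exact c.valid (hcliquei hv hv₀i hvv) (hvj.trans hv₀j.symm)
    · refine ⟨y, hy6, ?_⟩
      have hyne : y ≠ v₀ := by
        rintro rfl
        exact (hiDisj y hv₀i).2.2 hy6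
      show f y = j'
      rw [hfn y hyne, hyj']
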